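/- (Witt extension) Let S be a commutative local ring with involution, 2 ∈ S^×, and V free of rank 2m with nondegenerate skew hermitian form admitting a symplectic basis. Any symplectic set w₁,z₁,…,w_k,z_k in V with k ≤ m extends to a symplectic basis w₁,z₁,…,w_m,z_m of V. -/

import Mathlib

variable {S V : Type*} [CommRing S] [StarRing S] [AddCommGroup V] [Module S V]

/-- `b` is a symplectic basis for the skew hermitian form `h`. -/
def IsSympBasis {m : ℕ} (h : V →ₛₗ[starRingEnd S] V →ₗ[S] S)
    (b : Module.Basis (Fin m ⊕ Fin m) S V) : Prop :=
  (∀ i j, h (b (.inl i)) (b (.inr j)) = if i = j then 1 else 0) ∧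
  (∀ i j, h (b (.inl i)) (b (.inl j)) = 0) ∧
  (∀ i j, h (b (.inr i)) (b (.inr j)) = 0)

/-- `v` is a basis vector of the free module `V` of rank `2m`. -/
def IsBasisVector (S : Type*) {V : Type*} [CommRing S] [AddCommGroup V] [Module S V]
    (m : ℕ) (v : V) : Prop :=
  ∃ (c : Module.Basis (Fin m ⊕ Fin m) S V) (i : Fin m ⊕ Fin m), c i = v


namespace Stmt17Aux

variable (h : V →ₛₗ[starRingEnd S] V →ₗ[S] S)

/-- generalized Eichler transformation -/
def eich (e u : V) (t : S) : V → V := fun x => x + h e x • u + (h u x + t * h e x) • e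

variable {h}

lemma h_apply_add_left (x y v : V) : h (x + y) v = h x v + h y v := by
  simp [map_add]

lemma h_apply_smul_left (c : S) (x v : V) : h (c • x) v = star c * h x v := by
  simp [map_smulₛₗ, starRingEnd_apply]

section eich
variable (hskew : ∀ x y, star (h x y) = - h y x)
    {e u : V} {t : S} (hee : h e e = 0) (heu : h e u = 0) (hue : h u e = 0)
    (ht : star t - t = - h u u)

include hskew hee heu hue ht in
lemma eich_isometry (x y : V) : h (eich h e u t x) (eich h e u t y) = h x y := by
  have hxu : ∀ x, h x u = - star (h u x) := by
    intro x; rw [hskew]; ring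
  have hxe : ∀ x, h x e = - star (h e x) := by
    intro x; rw [hskew]; ring
  simp only [eich, map_add, map_smulₛₗ, LinearMap.add_apply, LinearMap.smul_apply,
    smul_eq_mul, starRingEnd_apply, map_smul, RingHom.id_apply]
  rw [hee, heu, hue, hxu, hxe]
  simp only [star_add, star_mul]
  linear_combination (star (h e x) * h e y) * ht

include hee heu hue ht in
lemma eich_inv (x : V) : eich h e (-u) (-(star t)) (eich h e u t x) = x := by
  simp only [eich, map_add, map_smul, map_neg, LinearMap.add_apply, LinearMap.smul_apply,
    LinearMap.neg_apply, smul_eq_mul, RingHom.id_apply]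
  rw [hee, heu, hue]
  have h1 : star t - t = - h u u := ht
  match_scalars
  all_goals first
    | ring1
    | linear_combination (h e x) * ht
    | linear_combination (-(h e x)) * ht
    | linear_combination (2*(h e x)) * ht
    | linear_combination (-(2*(h e x))) * ht
end eich

variable (h) in
/-- scaling map on a hyperbolic plane -/
def scale (p q : V) (l mu : S) : V → V :=
  fun x => x - ((l - 1) * h q x) • p + ((mu - 1) * h p x) • q

variable {p q : V} {l mu : S}

section scale
variable (hskew : ∀ x y, star (h x y) = - h y x)
    (hpq : h p q = 1) (hqp : h q p = -1) (hpp : h p p = 0) (hqq : h q q = 0)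
    (hlm : star l * mu = 1) (hml : l * star mu = 1)

include hskew hpq hqp hpp hqq hlm hml in
lemma scale_isometry (x y : V) : h (scale h p q l mu x) (scale h p q l mu y) = h x y := by
  have hxp : ∀ x, h x p = - star (h p x) := by intro x; rw [hskew]; ring
  have hxq : ∀ x, h x q = - star (h q x) := by intro x; rw [hskew]; ring
  simp only [scale, map_add, map_sub, map_smulₛₗ, LinearMap.add_apply, LinearMap.sub_apply,
    LinearMap.smul_apply, smul_eq_mul, starRingEnd_apply, map_smul, RingHom.id_apply]
  rw [hpq, hqp, hpp, hqq, hxp, hxq]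
  simp only [star_mul, star_sub, star_one]
  linear_combination (-(star (h q x) * h p y)) * hlm + (star (h p x) * h q y) * hml

include hpq hqp hpp hqq hlm hml in
lemma scale_inv (x : V) :
    scale h p q (star mu) (star l) (scale h p q l mu x) = x := by
  simp only [scale, map_add, map_sub, map_smulₛₗ, LinearMap.add_apply, LinearMap.sub_apply,
    LinearMap.smul_apply, smul_eq_mul, starRingEnd_apply, map_smul, RingHom.id_apply]
  rw [hpq, hqp, hpp, hqq]
  match_scalars
  all_goals first
    | ring1
    | linear_combination (h q x) * hml
    | linear_combination (-(h q x)) * hml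
    | linear_combination (h p x) * hlm
    | linear_combination (-(h p x)) * hlm
    | linear_combination (h q x) * hlm
    | linear_combination (-(h q x)) * hlm
    | linear_combination (h p x) * hml
    | linear_combination (-(h p x)) * hml

end scale

/-- the standard symplectic Gram matrix -/
def Jmat (S : Type*) [CommRing S] (m : ℕ) : Matrix (Fin m ⊕ Fin m) (Fin m ⊕ Fin m) S :=
  fun I J => match I, J with
  | .inl i, .inr j => if i = j then 1 else 0
  | .inr i, .inl j => if i = j then -1 else 0
  | _, _ => 0

lemma Jmat_mul_Jmat (m : ℕ) : (Jmat S m) * (Jmat S m) = -1 := by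
  ext I J
  cases I <;> cases J <;>
    simp [Matrix.mul_apply, Jmat, Fintype.sum_sum_type, Matrix.one_apply,
      Finset.sum_ite_eq, Finset.sum_ite_eq', ite_and, apply_ite] <;>
    (try (split <;> simp_all))

lemma isUnit_det_Jmat (m : ℕ) : IsUnit (Jmat S m).det := by
  apply IsUnit.of_mul_eq_one (Jmat S m).det
  rw [← Matrix.det_mul, Jmat_mul_Jmat]
  have : (-1 : Matrix (Fin m ⊕ Fin m) (Fin m ⊕ Fin m) S) = -(1 : Matrix _ _ S) := rfl
  rw [this, Matrix.det_neg, Matrix.det_one, mul_one, Fintype.card_sum, Fintype.card_fin]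
  exact Even.neg_one_pow ⟨m, rfl⟩

lemma basis_of_gram {m : ℕ} (b : Module.Basis (Fin m ⊕ Fin m) S V)
    (hbg : ∀ I J, h (b I) (b J) = Jmat S m I J)
    (v : Fin m ⊕ Fin m → V) (hvg : ∀ I J, h (v I) (v J) = Jmat S m I J) :
    ∃ c : Module.Basis (Fin m ⊕ Fin m) S V, ∀ I, c I = v I := by
  classical
  set A : Matrix (Fin m ⊕ Fin m) (Fin m ⊕ Fin m) S := fun I J => b.repr (v I) J with hA
  have key : Jmat S m = A.map star * Jmat S m * A.transpose := by
    ext I J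
    rw [← hvg I J]
    conv_lhs => rw [← b.sum_repr (v I), ← b.sum_repr (v J)]
    simp only [map_sum, map_smulₛₗ, LinearMap.sum_apply, LinearMap.smul_apply, map_smul,
      smul_eq_mul, starRingEnd_apply, Matrix.mul_apply, Matrix.transpose_apply,
      Matrix.map_apply, hbg, RingHom.id_apply, hA]
    exact Finset.sum_congr rfl fun q _ => mul_comm _ _
  have hdetJ := isUnit_det_Jmat (S := S) m
  rw [key, Matrix.det_mul, Matrix.det_mul, Matrix.det_transpose] at hdetJ
  have hAdet : IsUnit A.det :=
    isUnit_of_mul_isUnit_right hdetJ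
  set f : V →ₗ[S] V := b.constr ℕ v with hf
  have htm : LinearMap.toMatrix b b f = A.transpose := by
    ext i j
    rw [LinearMap.toMatrix_apply, hf, Module.Basis.constr_basis]
    rfl
  have hdet : IsUnit ((LinearMap.toMatrix b b) f).det := by
    rw [htm, Matrix.det_transpose]; exact hAdet
  refine ⟨b.map (LinearEquiv.ofIsUnitDet hdet), fun I => ?_⟩
  rw [Module.Basis.map_apply, LinearEquiv.ofIsUnitDet_apply, hf, Module.Basis.constr_basis]

lemma eich_fix {e u v : V} {t : S} (h1 : h e v = 0) (h2 : h u v = 0) :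
    eich h e u t v = v := by
  simp [eich, h1, h2]

lemma scale_fix {p q v : V} {l mu : S} (h1 : h q v = 0) (h2 : h p v = 0) :
    scale h p q l mu v = v := by
  simp [scale, h1, h2]

section basisrepr

variable {m : ℕ} (c : Module.Basis (Fin m ⊕ Fin m) S V)
    (gEE : ∀ i j, h (c (.inl i)) (c (.inl j)) = 0)
    (gEF : ∀ i j, h (c (.inl i)) (c (.inr j)) = if i = j then 1 else 0)
    (gFE : ∀ i j, h (c (.inr i)) (c (.inl j)) = if i = j then -1 else 0)
    (gFF : ∀ i j, h (c (.inr i)) (c (.inr j)) = 0)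

include gEE gEF in
lemma repr_inr (v : V) (j : Fin m) : (c.repr v) (.inr j) = h (c (.inl j)) v := by
  conv_rhs => rw [← c.sum_repr v]
  rw [map_sum, Fintype.sum_sum_type]
  simp [map_smul, gEE, gEF, mul_ite, Finset.sum_ite_eq]

include gFE gFF in
lemma repr_inl (v : V) (j : Fin m) : (c.repr v) (.inl j) = - h (c (.inr j)) v := by
  conv_rhs => rw [← c.sum_repr v]
  rw [map_sum, Fintype.sum_sum_type]
  simp [map_smul, gFE, gFF, mul_ite, Finset.sum_ite_eq]

lemma exists_isUnit_repr [IsLocalRing S] (W Z : V) (hWZ : h W Z = 1) :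
    ∃ I, IsUnit ((c.repr W) I) := by
  by_contra hcon
  push_neg at hcon
  have hsum : (1 : S) = ∑ I, star ((c.repr W) I) * h (c I) Z := by
    rw [← hWZ]
    conv_lhs => rw [← c.sum_repr W]
    rw [map_sum]
    simp only [LinearMap.sum_apply, map_smulₛₗ, LinearMap.smul_apply, smul_eq_mul,
      starRingEnd_apply]
  have hmem : (1 : S) ∈ IsLocalRing.maximalIdeal S := by
    rw [hsum]
    refine Ideal.sum_mem _ fun I _ => Ideal.mul_mem_right _ _ ?_
    rw [IsLocalRing.mem_maximalIdeal]
    simpa [isUnit_star, mem_nonunits_iff] using hcon I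
  exact (IsLocalRing.mem_maximalIdeal 1).1 hmem isUnit_one

end basisrepr

section step
variable [IsLocalRing S]

set_option maxHeartbeats 3000000 in
lemma step {m k : ℕ} (hkm : k < m)
    (hskew : ∀ x y, star (h x y) = - h y x) (h2 : IsUnit (2 : S))
    (c₀ : Module.Basis (Fin m ⊕ Fin m) S V) (hc₀ : IsSympBasis h c₀)
    (W Z : V)
    (hEW : ∀ j : Fin m, (j : ℕ) < k → h (c₀ (.inl j)) W = 0)
    (hFW : ∀ j : Fin m, (j : ℕ) < k → h (c₀ (.inr j)) W = 0)
    (hEZ : ∀ j : Fin m, (j : ℕ) < k → h (c₀ (.inl j)) Z = 0)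
    (hFZ : ∀ j : Fin m, (j : ℕ) < k → h (c₀ (.inr j)) Z = 0)
    (hWZ : h W Z = 1) (hWW : h W W = 0) (hZZ : h Z Z = 0) :
    ∃ c : Module.Basis (Fin m ⊕ Fin m) S V, IsSympBasis h c ∧
      (∀ j : Fin m, (j : ℕ) < k → c (.inl j) = c₀ (.inl j) ∧ c (.inr j) = c₀ (.inr j)) ∧
      c (.inl ⟨k, hkm⟩) = W ∧ c (.inr ⟨k, hkm⟩) = Z := by
  classical
  obtain ⟨gEF, gEE, gFF⟩ := hc₀
  set κ : Fin m := ⟨k, hkm⟩ with hκ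
  have hyx : ∀ x y : V, h y x = - star (h x y) := fun x y => by rw [hskew, neg_neg]
  have gFE : ∀ i j, h (c₀ (.inr i)) (c₀ (.inl j)) = if i = j then -1 else 0 := by
    intro i j; rw [hyx, gEF]
    rcases eq_or_ne i j with rfl | hne
    · simp
    · simp [hne, Ne.symm hne]
  have hκv : (κ : ℕ) = k := rfl
  have hκne : ∀ j : Fin m, (j : ℕ) ≠ k → κ ≠ j := by
    intro j hj hcon; exact hj (by rw [← hcon])
  have hκne' : ∀ j : Fin m, (j : ℕ) ≠ k → j ≠ κ := fun j hj => (hκne j hj).symm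
  -- facts about 2⁻¹
  obtain ⟨tw, htw⟩ := h2
  set i2 : S := ((tw⁻¹ : Sˣ) : S) with hi2
  have h2i2 : (2 : S) * i2 = 1 := by rw [← htw, hi2]; exact_mod_cast tw.mul_inv
  have hst2 : star (2 : S) = 2 := by
    rw [show (2:S) = 1 + 1 by norm_num, star_add, star_one]
  have hi2inv : star i2 * 2 = 1 := by
    rw [← hst2, ← star_mul, h2i2, star_one]
  have hi2st : star i2 = i2 := by
    calc star i2 = star i2 * (2 * i2) := by rw [h2i2, mul_one]
    _ = star i2 * 2 * i2 := by ring
    _ = i2 := by rw [hi2inv, one_mul]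
  have hdiag : ∀ x : V, star (h x x) = - h x x := fun x => hskew x x
  have hz2 : ∀ x : V, h 0 x = 0 := fun x => by simp
  -- STAGE 1 : find uu making `h (Eκ) (E₁ W)` a unit
  have hval : ∀ uu : V, h (c₀ (.inl κ)) (eich h (c₀ (.inr κ)) uu 0 W)
      = h (c₀ (.inl κ)) W + h (c₀ (.inr κ)) W * h (c₀ (.inl κ)) uu + h uu W := by
    intro uu
    simp only [eich, map_add, map_smul, smul_eq_mul, zero_mul, add_zero]
    rw [gEF]; simp
  obtain ⟨uu, huuFu, huuuF, huuuu, huuO, hunit⟩ :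
      ∃ uu : V, h (c₀ (.inr κ)) uu = 0 ∧ h uu (c₀ (.inr κ)) = 0 ∧ h uu uu = 0 ∧
        (∀ j : Fin m, (j : ℕ) < k → h uu (c₀ (.inl j)) = 0 ∧ h uu (c₀ (.inr j)) = 0) ∧
        IsUnit (h (c₀ (.inl κ)) (eich h (c₀ (.inr κ)) uu 0 W)) := by
    by_cases hbu : IsUnit (h (c₀ (.inl κ)) W)
    · refine ⟨0, by simp, by simp [hz2], by simp [hz2], fun j hj => ⟨hz2 _, hz2 _⟩, ?_⟩
      rw [hval]
      simpa [hz2] using hbu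
    · by_cases hau : IsUnit (h (c₀ (.inr κ)) W)
      · refine ⟨i2 • c₀ (.inr κ), ?_, ?_, ?_, ?_, ?_⟩
        · rw [map_smul, gFF]; simp
        · rw [map_smulₛₗ]; simp [gFF]
        · rw [map_smulₛₗ]; simp [map_smul, gFF]
        · intro j hj
          constructor
          · rw [map_smulₛₗ]; simp [gFE, hκne j (by omega)]
          · rw [map_smulₛₗ]; simp [gFF]
        · rw [hval]
          have hv1 : h (c₀ (.inl κ)) (i2 • c₀ (.inr κ)) = i2 := by
            rw [map_smul, gEF]; simp
          have hv2 : h (i2 • c₀ (.inr κ)) W = i2 * h (c₀ (.inr κ)) W := by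
            rw [map_smulₛₗ]; simp [starRingEnd_apply, hi2st]
          rw [hv1, hv2]
          have heq : h (c₀ (.inl κ)) W + h (c₀ (.inr κ)) W * i2 + i2 * h (c₀ (.inr κ)) W
              = h (c₀ (.inl κ)) W + h (c₀ (.inr κ)) W := by
            linear_combination h (c₀ (.inr κ)) W * h2i2
          rw [heq]
          -- nonunit + unit is a unit in a local ring
          by_contra hC
          have hd : IsUnit ((h (c₀ (.inl κ)) W + h (c₀ (.inr κ)) W) + (- h (c₀ (.inl κ)) W)) := by
            simpa using hau
          rcases IsLocalRing.isUnit_or_isUnit_of_isUnit_add hd with h' | h'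
          · exact hC h'
          · exact hbu (by simpa using h'.neg)
      · -- some coordinate beyond k is a unit
        obtain ⟨I, hI⟩ := exists_isUnit_repr (h := h) c₀ W Z hWZ
        rcases I with j | j
        · rw [repr_inl (h := h) c₀ gFE gFF W j] at hI
          have hI' : IsUnit (h (c₀ (.inr j)) W) := by simpa using hI.neg
          have hjk : k < (j : ℕ) := by
            rcases lt_trichotomy (j : ℕ) k with hj | hj | hj
            · rw [hFW j hj] at hI'; exact absurd hI' (by simp)
            · exfalso; apply hau
              have : j = κ := by apply Fin.ext; simpa using hj
              rwa [this] at hI'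
            · exact hj
          obtain ⟨du, hdu⟩ := hI'
          refine ⟨star ((1 - h (c₀ (.inl κ)) W) * ((du⁻¹ : Sˣ) : S)) • c₀ (.inr j),
            ?_, ?_, ?_, ?_, ?_⟩
          · rw [map_smul, gFF]; simp
          · rw [map_smulₛₗ]; simp [gFF]
          · rw [map_smulₛₗ]; simp [map_smul, gFF]
          · intro i hi
            constructor
            · rw [map_smulₛₗ]; simp [gFE, show j ≠ i from fun hcon => by subst hcon; omega]
            · rw [map_smulₛₗ]; simp [gFF]
          · rw [hval]
            have hv1 : h (c₀ (.inl κ)) (star ((1 - h (c₀ (.inl κ)) W) * ((du⁻¹ : Sˣ) : S)) • c₀ (.inr j)) = 0 := by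
              rw [map_smul, gEF, if_neg (hκne j (by omega))]; simp
            have hv2 : h (star ((1 - h (c₀ (.inl κ)) W) * ((du⁻¹ : Sˣ) : S)) • c₀ (.inr j)) W
                = (1 - h (c₀ (.inl κ)) W) * (((du⁻¹ : Sˣ) : S) * ((du : Sˣ) : S)) := by
              rw [map_smulₛₗ]
              simp only [starRingEnd_apply, star_star, smul_eq_mul, LinearMap.smul_apply]
              rw [hdu]; ring
            rw [hv1, hv2]
            have : ((du⁻¹ : Sˣ) : S) * ((du : Sˣ) : S) = 1 := by exact_mod_cast du.inv_mul
            rw [this]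
            simpa using isUnit_one
        · rw [repr_inr (h := h) c₀ gEE gEF W j] at hI
          have hjk : k < (j : ℕ) := by
            rcases lt_trichotomy (j : ℕ) k with hj | hj | hj
            · rw [hEW j hj] at hI; exact absurd hI (by simp)
            · exfalso; apply hbu
              have : j = κ := by apply Fin.ext; simpa using hj
              rwa [this] at hI
            · exact hj
          obtain ⟨du, hdu⟩ := hI
          refine ⟨star ((1 - h (c₀ (.inl κ)) W) * ((du⁻¹ : Sˣ) : S)) • c₀ (.inl j),
            ?_, ?_, ?_, ?_, ?_⟩
          · rw [map_smul, gFE, if_neg (hκne j (by omega))]; simp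
          · rw [map_smulₛₗ]; simp [gEF, hκne' j (by omega)]
          · rw [map_smulₛₗ]; simp [map_smul, gEE]
          · intro i hi
            constructor
            · rw [map_smulₛₗ]; simp [gEE]
            · rw [map_smulₛₗ]; simp [gEF, show j ≠ i from fun hcon => by subst hcon; omega]
          · rw [hval]
            have hv1 : h (c₀ (.inl κ)) (star ((1 - h (c₀ (.inl κ)) W) * ((du⁻¹ : Sˣ) : S)) • c₀ (.inl j)) = 0 := by
              rw [map_smul, gEE]; simp
            have hv2 : h (star ((1 - h (c₀ (.inl κ)) W) * ((du⁻¹ : Sˣ) : S)) • c₀ (.inl j)) W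
                = (1 - h (c₀ (.inl κ)) W) * (((du⁻¹ : Sˣ) : S) * ((du : Sˣ) : S)) := by
              rw [map_smulₛₗ]
              simp only [starRingEnd_apply, star_star, smul_eq_mul, LinearMap.smul_apply]
              rw [hdu]; ring
            rw [hv1, hv2]
            have : ((du⁻¹ : Sˣ) : S) * ((du : Sˣ) : S) = 1 := by exact_mod_cast du.inv_mul
            rw [this]
            simpa using isUnit_one
  -- abbreviations for stage 1
  have ht0 : star (0:S) - 0 = - h uu uu := by simp [huuuu]
  have hE₁iso : ∀ x y, h (eich h (c₀ (.inr κ)) uu 0 x) (eich h (c₀ (.inr κ)) uu 0 y) = h x y :=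
    fun x y => eich_isometry hskew (gFF κ κ) huuFu huuuF ht0 x y
  have hE₁fix : ∀ j : Fin m, (j:ℕ) < k →
      eich h (c₀ (.inr κ)) uu 0 (c₀ (.inl j)) = c₀ (.inl j) ∧
      eich h (c₀ (.inr κ)) uu 0 (c₀ (.inr j)) = c₀ (.inr j) := by
    intro j hj
    constructor
    · exact eich_fix (by rw [gFE, if_neg (hκne j (by omega))]) ((huuO j hj).1)
    · exact eich_fix (by rw [gFF]) ((huuO j hj).2)
  set W₁ : V := eich h (c₀ (.inr κ)) uu 0 W with hW₁def
  set u : S := h (c₀ (.inl κ)) W₁ with hu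
  have huUnit : IsUnit u := hunit
  obtain ⟨un, hun⟩ := huUnit
  set uinv : S := ((un⁻¹ : Sˣ) : S) with huinvdef
  have huu1 : u * uinv = 1 := by rw [← hun, huinvdef]; exact_mod_cast un.mul_inv
  have huu2 : uinv * u = 1 := by rw [← hun, huinvdef]; exact_mod_cast un.inv_mul
  have hstaru : star u * star uinv = 1 := by rw [← star_mul, huu2, star_one]
  have hW₁O : ∀ j : Fin m, (j:ℕ) < k → h (c₀ (.inl j)) W₁ = 0 ∧ h (c₀ (.inr j)) W₁ = 0 := by
    intro j hj
    constructor
    · conv_lhs => rw [← (hE₁fix j hj).1, hW₁def]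
      rw [hE₁iso]; exact hEW j hj
    · conv_lhs => rw [← (hE₁fix j hj).2, hW₁def]
      rw [hE₁iso]; exact hFW j hj
  have hW₁W₁ : h W₁ W₁ = 0 := by rw [hW₁def, hE₁iso]; exact hWW
  -- STAGE 2
  set a₁ : S := h (c₀ (.inr κ)) W₁ with ha₁
  set Wt : V := W₁ + a₁ • c₀ (.inl κ) - u • c₀ (.inr κ) with hWt
  set u₀ : V := -(uinv • Wt) with hu₀def
  have hEκWt : h (c₀ (.inl κ)) Wt = 0 := by
    rw [hWt, map_sub, map_add, map_smul, map_smul, gEE, gEF, ← hu]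
    simp
  have hEκu₀ : h (c₀ (.inl κ)) u₀ = 0 := by
    rw [hu₀def, map_neg, map_smul, hEκWt]; simp
  have hu₀Eκ : h u₀ (c₀ (.inl κ)) = 0 := by rw [hyx, hEκu₀, star_zero, neg_zero]
  set t : S := i2 * h u₀ u₀ with htdef
  have htcond : star t - t = - h u₀ u₀ := by
    rw [htdef, star_mul, hi2st, hdiag u₀]
    linear_combination (- h u₀ u₀) * h2i2
  have hE₂iso : ∀ x y, h (eich h (c₀ (.inl κ)) u₀ t x) (eich h (c₀ (.inl κ)) u₀ t y) = h x y :=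
    fun x y => eich_isometry hskew (gEE κ κ) hEκu₀ hu₀Eκ htcond x y
  have hu₀O : ∀ j : Fin m, (j:ℕ) < k → h u₀ (c₀ (.inl j)) = 0 ∧ h u₀ (c₀ (.inr j)) = 0 := by
    intro j hj
    have hWtE : h Wt (c₀ (.inl j)) = 0 := by
      rw [hWt, map_sub, map_add, map_smulₛₗ, map_smulₛₗ]
      simp only [LinearMap.sub_apply, LinearMap.add_apply, LinearMap.smul_apply, smul_eq_mul,
        starRingEnd_apply]
      rw [gEE, gFE, if_neg (hκne j (by omega))]
      rw [hyx, (hW₁O j hj).1]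
      simp
    have hWtF : h Wt (c₀ (.inr j)) = 0 := by
      rw [hWt, map_sub, map_add, map_smulₛₗ, map_smulₛₗ]
      simp only [LinearMap.sub_apply, LinearMap.add_apply, LinearMap.smul_apply, smul_eq_mul,
        starRingEnd_apply]
      rw [gEF, if_neg (hκne j (by omega)), gFF]
      rw [hyx, (hW₁O j hj).2]
      simp
    constructor
    · rw [hu₀def, map_neg, map_smulₛₗ]
      simp only [LinearMap.neg_apply, LinearMap.smul_apply, smul_eq_mul]
      rw [hWtE]; simp
    · rw [hu₀def, map_neg, map_smulₛₗ]
      simp only [LinearMap.neg_apply, LinearMap.smul_apply, smul_eq_mul]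
      rw [hWtF]; simp
  set s : S := h u₀ W₁ + t * u - a₁ with hs
  set W₂ : V := eich h (c₀ (.inl κ)) u₀ t W₁ with hW₂def
  have hW₂ : W₂ = s • c₀ (.inl κ) + u • c₀ (.inr κ) := by
    rw [hW₂def]
    simp only [eich, ← hu, hu₀def, hs, hWt]
    match_scalars
    all_goals first
      | ring1
      | linear_combination huu1
      | linear_combination (-1 : S) * huu1
      | linear_combination a₁ * huu1
      | linear_combination (-a₁) * huu1
      | linear_combination u * huu1
      | linear_combination (-u) * huu1
  have hW₂W₂ : h W₂ W₂ = 0 := by rw [hW₂def, hE₂iso]; exact hW₁W₁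
  have hrel : star s * u = star u * s := by
    rw [hW₂] at hW₂W₂
    simp only [map_add, map_smulₛₗ, map_smul, LinearMap.add_apply, LinearMap.smul_apply,
      smul_eq_mul, starRingEnd_apply, RingHom.id_apply] at hW₂W₂
    rw [gEE, gEF, gFE, gFF, if_pos rfl, if_pos rfl] at hW₂W₂
    linear_combination hW₂W₂ - star u * hs - (star u * u) * htdef
  -- STAGE 3
  set t₁ : S := -(s * uinv) with ht₁def
  have hkey : star s * star uinv = s * uinv := by
    linear_combination (uinv * star uinv) * hrel + (-(star s * star uinv)) * huu1 +
      (s * uinv) * hstaru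
  have ht₁sa : star t₁ = t₁ := by
    rw [ht₁def, star_neg, star_mul]
    rw [show star uinv * star s = star s * star uinv from mul_comm _ _, hkey]
  have ht₁cond : star t₁ - t₁ = - h (0:V) (0:V) := by rw [ht₁sa]; simp
  have hT3iso : ∀ x y, h (eich h (c₀ (.inl κ)) 0 t₁ x) (eich h (c₀ (.inl κ)) 0 t₁ y) = h x y :=
    fun x y => eich_isometry hskew (gEE κ κ) (map_zero _) (hz2 _) ht₁cond x y
  have hEκW₂ : h (c₀ (.inl κ)) W₂ = u := by
    rw [hW₂, map_add, map_smul, map_smul, gEE, gEF, if_pos rfl]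
    simp
  set W₃ : V := eich h (c₀ (.inl κ)) 0 t₁ W₂ with hW₃def
  have hW₃ : W₃ = u • c₀ (.inr κ) := by
    rw [hW₃def]
    simp only [eich, hEκW₂, hz2, smul_zero, add_zero, zero_add]
    rw [hW₂, ht₁def]
    match_scalars
    all_goals first
      | ring1
      | linear_combination s * huu2
      | linear_combination (-s) * huu2
  -- STAGE 4
  have hpq : h (c₀ (.inl κ)) (c₀ (.inr κ)) = 1 := by rw [gEF, if_pos rfl]
  have hqp : h (c₀ (.inr κ)) (c₀ (.inl κ)) = -1 := by rw [gFE, if_pos rfl]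
  have hlm : star (star u) * uinv = 1 := by rw [star_star]; exact huu1
  have hml : star u * star uinv = 1 := hstaru
  have hDiso : ∀ x y, h (scale h (c₀ (.inl κ)) (c₀ (.inr κ)) (star u) uinv x)
      (scale h (c₀ (.inl κ)) (c₀ (.inr κ)) (star u) uinv y) = h x y :=
    fun x y => scale_isometry hskew hpq hqp (gEE κ κ) (gFF κ κ) hlm hml x y
  have hW₄ : scale h (c₀ (.inl κ)) (c₀ (.inr κ)) (star u) uinv W₃ = c₀ (.inr κ) := by
    rw [hW₃]
    simp only [scale, map_smul, smul_eq_mul]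
    rw [gFF, gEF, if_pos rfl]
    match_scalars
    all_goals first
      | ring1
      | linear_combination huu2
      | linear_combination (-1 : S) * huu2
      | linear_combination u * huu2
      | linear_combination (-u) * huu2
  -- the composite forward isometry
  set g : V → V := fun x => scale h (c₀ (.inl κ)) (c₀ (.inr κ)) (star u) uinv
      (eich h (c₀ (.inl κ)) 0 t₁ (eich h (c₀ (.inl κ)) u₀ t (eich h (c₀ (.inr κ)) uu 0 x)))
    with hgdef
  have hgiso : ∀ x y, h (g x) (g y) = h x y := by
    intro x y
    simp only [hgdef]
    rw [hDiso, hT3iso, hE₂iso, hE₁iso]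
  have hgW : g W = c₀ (.inr κ) := by
    simp only [hgdef]
    rw [← hW₁def, ← hW₂def, ← hW₃def, hW₄]
  have hgfix : ∀ j : Fin m, (j:ℕ) < k →
      g (c₀ (.inl j)) = c₀ (.inl j) ∧ g (c₀ (.inr j)) = c₀ (.inr j) := by
    intro j hj
    have hκj : κ ≠ j := hκne j (by omega)
    constructor
    · simp only [hgdef]
      rw [(hE₁fix j hj).1,
        eich_fix (gEE κ j) ((hu₀O j hj).1),
        eich_fix (gEE κ j) (hz2 _),
        scale_fix (by rw [gFE, if_neg hκj]) (gEE κ j)]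
    · simp only [hgdef]
      rw [(hE₁fix j hj).2,
        eich_fix (by rw [gEF, if_neg hκj]) ((hu₀O j hj).2),
        eich_fix (by rw [gEF, if_neg hκj]) (hz2 _),
        scale_fix (gFF κ j) (by rw [gEF, if_neg hκj])]
  -- the inverse isometry
  set g' : V → V := fun x => eich h (c₀ (.inr κ)) (-uu) (-(star (0:S)))
      (eich h (c₀ (.inl κ)) (-u₀) (-(star t))
        (eich h (c₀ (.inl κ)) (-(0:V)) (-(star t₁))
          (scale h (c₀ (.inl κ)) (c₀ (.inr κ)) (star uinv) (star (star u)) x)))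
    with hg'def
  -- side conditions for the primed maps
  have hnegu : ∀ (e v : V), h e v = 0 → h e (-v) = 0 := fun e v hv => by
    rw [map_neg, hv, neg_zero]
  have hnegu' : ∀ (e v : V), h v e = 0 → h (-v) e = 0 := fun e v hv => by
    rw [map_neg, LinearMap.neg_apply, hv, neg_zero]
  have hnn : ∀ v : V, h (-v) (-v) = h v v := fun v => by simp
  have ht0' : star (-(star (0:S))) - (-(star (0:S))) = - h (-uu) (-uu) := by
    rw [hnn]; simp [huuuu]
  have htc' : star (-(star t)) - (-(star t)) = - h (-u₀) (-u₀) := by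
    rw [hnn, star_neg, star_star]
    linear_combination htcond
  have ht₁c' : star (-(star t₁)) - (-(star t₁)) = - h (-(0:V)) (-(0:V)) := by
    rw [hnn, star_neg, star_star, ht₁sa]
    simp [hz2]
  have hlm' : star (star uinv) * star (star u) = 1 := by
    rw [star_star, star_star, mul_comm]; exact huu1
  have hml' : star uinv * star (star (star u)) = 1 := by
    rw [star_star, mul_comm]; exact hstaru
  have hg'iso : ∀ x y, h (g' x) (g' y) = h x y := by
    intro x y
    simp only [hg'def]
    rw [eich_isometry hskew (gFF κ κ) (hnegu _ _ huuFu) (hnegu' _ _ huuuF) ht0',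
      eich_isometry hskew (gEE κ κ) (hnegu _ _ hEκu₀) (hnegu' _ _ hu₀Eκ) htc',
      eich_isometry hskew (gEE κ κ) (hnegu _ _ (map_zero _)) (hnegu' _ _ (hz2 _)) ht₁c',
      scale_isometry hskew hpq hqp (gEE κ κ) (gFF κ κ) hlm' hml']
  have hg'fix : ∀ j : Fin m, (j:ℕ) < k →
      g' (c₀ (.inl j)) = c₀ (.inl j) ∧ g' (c₀ (.inr j)) = c₀ (.inr j) := by
    intro j hj
    have hκj : κ ≠ j := hκne j (by omega)
    constructor
    · simp only [hg'def]
      rw [scale_fix (by rw [gFE, if_neg hκj]) (gEE κ j),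
        eich_fix (gEE κ j) (hnegu' _ _ (hz2 _)),
        eich_fix (gEE κ j) (hnegu' _ _ (hu₀O j hj).1),
        eich_fix (by rw [gFE, if_neg hκj]) (hnegu' _ _ (huuO j hj).1)]
    · simp only [hg'def]
      rw [scale_fix (gFF κ j) (by rw [gEF, if_neg hκj]),
        eich_fix (by rw [gEF, if_neg hκj]) (hnegu' _ _ (hz2 _)),
        eich_fix (by rw [gEF, if_neg hκj]) (hnegu' _ _ (hu₀O j hj).2),
        eich_fix (gFF κ j) (hnegu' _ _ (huuO j hj).2)]
  have hginv : ∀ x, g' (g x) = x := by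
    intro x
    simp only [hgdef, hg'def]
    rw [scale_inv hpq hqp (gEE κ κ) (gFF κ κ) hlm hml,
      eich_inv (gEE κ κ) (map_zero _) (hz2 _) ht₁cond,
      eich_inv (gEE κ κ) hEκu₀ hu₀Eκ htcond,
      eich_inv (gFF κ κ) huuFu huuuF ht0]
  -- the corrected hyperbolic pair
  set q : V := g Z with hqdef
  have hpq1 : h (c₀ (.inr κ)) q = 1 := by rw [hqdef, ← hgW, hgiso]; exact hWZ
  have hqq0 : h q q = 0 := by rw [hqdef, hgiso]; exact hZZ
  have hqFκ : h q (c₀ (.inr κ)) = -1 := by rw [hyx, hpq1]; simp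
  have hEjq : ∀ j : Fin m, (j:ℕ) < k → h (c₀ (.inl j)) q = 0 := fun j hj => by
    rw [hqdef, ← (hgfix j hj).1, hgiso]; exact hEZ j hj
  have hFjq : ∀ j : Fin m, (j:ℕ) < k → h (c₀ (.inr j)) q = 0 := fun j hj => by
    rw [hqdef, ← (hgfix j hj).2, hgiso]; exact hFZ j hj
  -- the projection away from the plane (Fκ, q)
  set π : V → V := fun v => v - h (c₀ (.inr κ)) v • q + h q v • c₀ (.inr κ) with hπdef
  have hπp : ∀ v, h (c₀ (.inr κ)) (π v) = 0 := by
    intro v; simp only [hπdef]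
    rw [map_add, map_sub, map_smul, map_smul, hpq1, gFF]; simp
  have hπq : ∀ v, h q (π v) = 0 := by
    intro v; simp only [hπdef]
    rw [map_add, map_sub, map_smul, map_smul, hqq0, hqFκ]; simp
  have hπl : ∀ v x, h (π v) x
      = h v x - star (h (c₀ (.inr κ)) v) * h q x + star (h q v) * h (c₀ (.inr κ)) x := by
    intro v x
    simp only [hπdef, map_sub, map_add, map_smulₛₗ, LinearMap.sub_apply, LinearMap.add_apply,
      LinearMap.smul_apply, smul_eq_mul, starRingEnd_apply]
  have hππ : ∀ v x, h (π v) (π x) = h v (π x) := by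
    intro v x; rw [hπl, hπp, hπq]; ring
  have hvπ : ∀ v x, h v (π x)
      = h v x - h (c₀ (.inr κ)) x * h v q + h q x * h v (c₀ (.inr κ)) := by
    intro v x
    simp only [hπdef, map_sub, map_add, map_smul, LinearMap.sub_apply, LinearMap.add_apply,
      smul_eq_mul]
  have hπFκ' : ∀ x, h (π x) (c₀ (.inr κ)) = 0 := fun x => by rw [hyx, hπp]; simp
  have hπq' : ∀ x, h (π x) q = 0 := fun x => by rw [hyx, hπq]; simp
  have hπtail : ∀ (x y : V), h (c₀ (.inr κ)) y = 0 → h x (c₀ (.inr κ)) = 0 →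
      h x (π y) = h x y := by
    intro x y h1 h2; rw [hvπ, h1, h2]; ring
  have hπleft : ∀ (x y : V), h (c₀ (.inr κ)) x = 0 → h (c₀ (.inr κ)) y = 0 →
      h (π x) y = h x y := by
    intro x y h1 h2; rw [hπl, h1, h2]; simp
  -- the final family before applying g'
  set fam : Fin m ⊕ Fin m → V := Sum.elim
      (fun i => if (i:ℕ) < k then c₀ (.inl i) else if (i:ℕ) = k then c₀ (.inr κ)
        else π (c₀ (.inl i)))
      (fun i => if (i:ℕ) < k then c₀ (.inr i) else if (i:ℕ) = k then q
        else π (c₀ (.inr i))) with hfamdef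
  have hfamGram : ∀ I J, h (fam I) (fam J) = Jmat S m I J := by
    have cEF : ∀ (i : Fin m), (i:ℕ) ≠ k → h (c₀ (.inl i)) (c₀ (.inr κ)) = 0 := fun i hi => by
      rw [gEF, if_neg (hκne' i hi)]
    have cFE : ∀ (j : Fin m), (j:ℕ) ≠ k → h (c₀ (.inr κ)) (c₀ (.inl j)) = 0 := fun j hj => by
      rw [gFE, if_neg (hκne j hj)]
    intro I J
    rcases I with i | i <;> rcases J with j | j
    · -- inl inl
      rcases Nat.lt_trichotomy (i:ℕ) k with hi | hi | hi <;>
        rcases Nat.lt_trichotomy (j:ℕ) k with hj | hj | hj <;>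
        simp only [hfamdef, Sum.elim_inl, Jmat]
      · rw [if_pos hi, if_pos hj, gEE]
      · rw [if_pos hi, if_neg (by omega), if_pos hj, cEF i (by omega)]
      · rw [if_pos hi, if_neg (by omega), if_neg (by omega),
          hπtail _ _ (cFE j (by omega)) (cEF i (by omega)), gEE]
      · rw [if_neg (by omega), if_pos hi, if_pos hj, cFE j (by omega)]
      · rw [if_neg (by omega), if_pos hi, if_neg (by omega), if_pos hj, gFF]
      · rw [if_neg (by omega), if_pos hi, if_neg (by omega), if_neg (by omega), hπp]
      · rw [if_neg (by omega), if_neg (by omega), if_pos hj,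
          hπleft _ _ (cFE i (by omega)) (cFE j (by omega)), gEE]
      · rw [if_neg (by omega), if_neg (by omega), if_neg (by omega), if_pos hj, hπFκ']
      · rw [if_neg (by omega), if_neg (by omega), if_neg (by omega), if_neg (by omega),
          hππ, hπtail _ _ (cFE j (by omega)) (cEF i (by omega)), gEE]
    · -- inl inr
      rcases Nat.lt_trichotomy (i:ℕ) k with hi | hi | hi <;>
        rcases Nat.lt_trichotomy (j:ℕ) k with hj | hj | hj <;>
        simp only [hfamdef, Sum.elim_inl, Sum.elim_inr, Jmat]
      · rw [if_pos hi, if_pos hj, gEF]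
      · rw [if_pos hi, if_neg (by omega), if_pos hj, hEjq i hi,
          if_neg (show i ≠ j from fun hc => by rw [hc] at hi; omega)]
      · rw [if_pos hi, if_neg (by omega), if_neg (by omega),
          hπtail _ _ (gFF κ j) (cEF i (by omega)), gEF]
      · rw [if_neg (by omega), if_pos hi, if_pos hj, gFF,
          if_neg (show i ≠ j from fun hc => by rw [hc] at hi; omega)]
      · rw [if_neg (by omega), if_pos hi, if_neg (by omega), if_pos hj, hpq1,
          if_pos (show i = j from Fin.ext (by omega))]
      · rw [if_neg (by omega), if_pos hi, if_neg (by omega), if_neg (by omega), hπp,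
          if_neg (show i ≠ j from fun hc => by rw [hc] at hi; omega)]
      · rw [if_neg (by omega), if_neg (by omega), if_pos hj,
          hπleft _ _ (cFE i (by omega)) (gFF κ j), gEF]
      · rw [if_neg (by omega), if_neg (by omega), if_neg (by omega), if_pos hj, hπq',
          if_neg (show i ≠ j from fun hc => by rw [← hc] at hj; omega)]
      · rw [if_neg (by omega), if_neg (by omega), if_neg (by omega), if_neg (by omega),
          hππ, hπtail _ _ (gFF κ j) (cEF i (by omega)), gEF]
    · -- inr inl
      rcases Nat.lt_trichotomy (i:ℕ) k with hi | hi | hi <;>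
        rcases Nat.lt_trichotomy (j:ℕ) k with hj | hj | hj <;>
        simp only [hfamdef, Sum.elim_inl, Sum.elim_inr, Jmat]
      · rw [if_pos hi, if_pos hj, gFE]
      · rw [if_pos hi, if_neg (by omega), if_pos hj, gFF,
          if_neg (show i ≠ j from fun hc => by rw [hc] at hi; omega)]
      · rw [if_pos hi, if_neg (by omega), if_neg (by omega),
          hπtail _ _ (cFE j (by omega)) (gFF i κ), gFE]
      · rw [if_neg (by omega), if_pos hi, if_pos hj, hyx, hEjq j hj, star_zero, neg_zero,
          if_neg (show i ≠ j from fun hc => by rw [hc] at hi; omega)]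
      · rw [if_neg (by omega), if_pos hi, if_neg (by omega), if_pos hj, hqFκ,
          if_pos (show i = j from Fin.ext (by omega))]
      · rw [if_neg (by omega), if_pos hi, if_neg (by omega), if_neg (by omega), hπq,
          if_neg (show i ≠ j from fun hc => by rw [hc] at hi; omega)]
      · rw [if_neg (by omega), if_neg (by omega), if_pos hj,
          hπleft _ _ (gFF κ i) (cFE j (by omega)), gFE]
      · rw [if_neg (by omega), if_neg (by omega), if_neg (by omega), if_pos hj, hπFκ',
          if_neg (show i ≠ j from fun hc => by rw [← hc] at hj; omega)]
      · rw [if_neg (by omega), if_neg (by omega), if_neg (by omega), if_neg (by omega),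
          hππ, hπtail _ _ (cFE j (by omega)) (gFF i κ), gFE]
    · -- inr inr
      rcases Nat.lt_trichotomy (i:ℕ) k with hi | hi | hi <;>
        rcases Nat.lt_trichotomy (j:ℕ) k with hj | hj | hj <;>
        simp only [hfamdef, Sum.elim_inr, Jmat]
      · rw [if_pos hi, if_pos hj, gFF]
      · rw [if_pos hi, if_neg (by omega), if_pos hj, hFjq i hi]
      · rw [if_pos hi, if_neg (by omega), if_neg (by omega),
          hπtail _ _ (gFF κ j) (gFF i κ), gFF]
      · rw [if_neg (by omega), if_pos hi, if_pos hj, hyx, hFjq j hj, star_zero, neg_zero]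
      · rw [if_neg (by omega), if_pos hi, if_neg (by omega), if_pos hj, hqq0]
      · rw [if_neg (by omega), if_pos hi, if_neg (by omega), if_neg (by omega), hπq]
      · rw [if_neg (by omega), if_neg (by omega), if_pos hj,
          hπleft _ _ (gFF κ i) (gFF κ j), gFF]
      · rw [if_neg (by omega), if_neg (by omega), if_neg (by omega), if_pos hj, hπq']
      · rw [if_neg (by omega), if_neg (by omega), if_neg (by omega), if_neg (by omega),
          hππ, hπtail _ _ (gFF κ j) (gFF i κ), gFF]
  -- assemble the basis
  have hbgram : ∀ I J, h (c₀ I) (c₀ J) = Jmat S m I J := by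
    rintro (i | i) (j | j) <;> simp only [Jmat] <;>
      first
        | exact gEE i j
        | exact gEF i j
        | exact gFE i j
        | exact gFF i j
  obtain ⟨c, hc⟩ := basis_of_gram (h := h) c₀ hbgram (fun I => g' (fam I))
      (fun I J => by rw [hg'iso]; exact hfamGram I J)
  have hcg : ∀ I J, h (c I) (c J) = Jmat S m I J := fun I J => by
    rw [hc, hc, hg'iso]; exact hfamGram I J
  refine ⟨c, ⟨fun i j => ?_, fun i j => ?_, fun i j => ?_⟩, fun j hj => ⟨?_, ?_⟩, ?_, ?_⟩
  · rw [hcg]; simp [Jmat]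
  · rw [hcg]; simp [Jmat]
  · rw [hcg]; simp [Jmat]
  · rw [hc]; simp only [hfamdef, Sum.elim_inl]; rw [if_pos hj]; exact (hg'fix j hj).1
  · rw [hc]; simp only [hfamdef, Sum.elim_inr]; rw [if_pos hj]; exact (hg'fix j hj).2
  · rw [hc]
    have hfml : fam (Sum.inl κ) = c₀ (.inr κ) := by
      simp only [hfamdef, Sum.elim_inl]
      split_ifs with h1 h2 <;> first | rfl | omega
    rw [hfml, ← hgW, hginv]
  · rw [hc]
    have hfmr : fam (Sum.inr κ) = q := by
      simp only [hfamdef, Sum.elim_inr]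
      split_ifs with h1 h2 <;> first | rfl | omega
    rw [hfmr, hqdef, hginv]

end step

end Stmt17Aux

/-- Witt extension: a symplectic set `w₁,z₁,…,w_k,z_k` with `k ≤ m`
extends to a symplectic basis of `V`. -/
theorem stmt17 [IsLocalRing S] {m : ℕ} (h2 : IsUnit (2 : S))
    (h : V →ₛₗ[starRingEnd S] V →ₗ[S] S)
    (hskew : ∀ x y, star (h x y) = - h y x)
    (hnd : ∀ x, (∀ y, h x y = 0) → x = 0)
    (b : Module.Basis (Fin m ⊕ Fin m) S V) (hb : IsSympBasis h b)
    (k : ℕ) (hk : k ≤ m) (w z : Fin k → V)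
    (hwz : ∀ i j, h (w i) (z j) = if i = j then 1 else 0)
    (hww : ∀ i j, h (w i) (w j) = 0)
    (hzz : ∀ i j, h (z i) (z j) = 0) :
    ∃ c : Module.Basis (Fin m ⊕ Fin m) S V, IsSympBasis h c ∧
      ∀ i : Fin k, c (.inl (Fin.castLE hk i)) = w i ∧ c (.inr (Fin.castLE hk i)) = z i := by
  classical
  have hyx : ∀ x y : V, h y x = - star (h x y) := fun x y => by rw [hskew, neg_neg]
  clear hnd
  revert hwz hww hzz
  revert w z
  revert hk
  induction k with
  | zero =>
    intro hk w z hwz hww hzz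
    exact ⟨b, hb, fun i => i.elim0⟩
  | succ k ih =>
    intro hk w z hwz hww hzz
    have hk' : k ≤ m := Nat.le_of_succ_le hk
    obtain ⟨c₀, hc₀, hmatch⟩ := ih hk' (fun i => w i.castSucc) (fun i => z i.castSucc)
      (fun i j => by rw [hwz]; simp [Fin.castSucc_inj])
      (fun i j => hww _ _) (fun i j => hzz _ _)
    have hidE : ∀ (j : Fin m) (hj : (j : ℕ) < k), c₀ (Sum.inl j) = w (Fin.castSucc ⟨j, hj⟩) := by
      intro j hj
      have h1 := (hmatch ⟨j, hj⟩).1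
      have hcast : Fin.castLE hk' ⟨j, hj⟩ = j := Fin.ext rfl
      rw [hcast] at h1; exact h1
    have hidF : ∀ (j : Fin m) (hj : (j : ℕ) < k), c₀ (Sum.inr j) = z (Fin.castSucc ⟨j, hj⟩) := by
      intro j hj
      have h1 := (hmatch ⟨j, hj⟩).2
      have hcast : Fin.castLE hk' ⟨j, hj⟩ = j := Fin.ext rfl
      rw [hcast] at h1; exact h1
    obtain ⟨c, hsymp, hearly, hcW, hcZ⟩ := Stmt17Aux.step (h := h) hk hskew h2 c₀ hc₀
      (w (Fin.last k)) (z (Fin.last k))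
      (fun j hj => by rw [hidE j hj]; exact hww _ _)
      (fun j hj => by
        rw [hidF j hj, hyx, hwz,
          if_neg (show Fin.last k ≠ Fin.castSucc ⟨j, hj⟩ from fun hc => by
            have := congrArg Fin.val hc; simp at this; omega)]
        simp)
      (fun j hj => by
        rw [hidE j hj, hwz,
          if_neg (show Fin.castSucc ⟨j, hj⟩ ≠ Fin.last k from fun hc => by
            have := congrArg Fin.val hc; simp at this; omega)])
      (fun j hj => by rw [hidF j hj]; exact hzz _ _)
      (by rw [hwz, if_pos rfl]) (hww _ _) (hzz _ _)
    refine ⟨c, hsymp, fun i => ?_⟩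
    by_cases hik : (i : ℕ) < k
    · constructor
      · rw [(hearly _ hik).1, hidE _ hik]
        exact congrArg w (Fin.ext rfl)
      · rw [(hearly _ hik).2, hidF _ hik]
        exact congrArg z (Fin.ext rfl)
    · have hik2 : (i : ℕ) = k := by have := i.isLt; omega
      have hieq : i = Fin.last k := Fin.ext (by simpa using hik2)
      have hc1 : Fin.castLE hk i = ⟨k, hk⟩ := Fin.ext (by simpa using hik2)
      exact ⟨by rw [hc1, hcW, hieq], by rw [hc1, hcZ, hieq]⟩
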